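/- For all g, g' ∈ G∖H, μ_g·μ_{g'} = a·σ_{g·g'} + b·μ_{g·g'·x} + b·μ_{g·g'·x³} (note g·g' ∈ H and g·g'·x, g·g'·x³ ∈ G∖H). -/
import Mathlib


open Matrix Kronecker

/-- The block matrix `E` with zero diagonal blocks and all-ones off-diagonal blocks. -/
def Etil (n : ℕ) : Matrix (Fin 1 ⊕ Fin (n - 1)) (Fin 1 ⊕ Fin (n - 1)) ℚ :=
  Matrix.fromBlocks 0 (Matrix.of fun _ _ => 1) (Matrix.of fun _ _ => 1) 0

/-- The block matrix `Ã` with `A` as lower-right block and zeros elsewhere. -/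
def Atil {n : ℕ} (A : Matrix (Fin (n - 1)) (Fin (n - 1)) ℚ) :
    Matrix (Fin 1 ⊕ Fin (n - 1)) (Fin 1 ⊕ Fin (n - 1)) ℚ :=
  Matrix.fromBlocks 0 0 0 A

/-- The permutation matrix of the 4-cycle (1,2,3,4). -/
def xD : Matrix (Fin 4) (Fin 4) ℚ := !![0,1,0,0; 0,0,1,0; 0,0,0,1; 1,0,0,0]

/-- The permutation matrix of (1,2)(3,4). -/
def yD : Matrix (Fin 4) (Fin 4) ℚ := !![0,1,0,0; 1,0,0,0; 0,0,0,1; 0,0,1,0]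

/-- `σ_h := I_n ⊗ h`. -/
def sig (n : ℕ) (h : Matrix (Fin 4) (Fin 4) ℚ) :
    Matrix ((Fin 1 ⊕ Fin (n - 1)) × Fin 4) ((Fin 1 ⊕ Fin (n - 1)) × Fin 4) ℚ :=
  (1 : Matrix (Fin 1 ⊕ Fin (n - 1)) (Fin 1 ⊕ Fin (n - 1)) ℚ) ⊗ₖ h

/-- `μ_g := E ⊗ g + Ã₁ ⊗ (g·y) + Ã₂ ⊗ (g·x²·y)`. -/
def mu {n : ℕ} (A₁ : Matrix (Fin (n - 1)) (Fin (n - 1)) ℚ) (g : Matrix (Fin 4) (Fin 4) ℚ) :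
    Matrix ((Fin 1 ⊕ Fin (n - 1)) × Fin 4) ((Fin 1 ⊕ Fin (n - 1)) × Fin 4) ℚ :=
  Etil n ⊗ₖ g + Atil A₁ ⊗ₖ (g * yD) + Atil A₁ᵀ ⊗ₖ (g * xD ^ 2 * yD)


theorem mul_fin_four' {α} [AddCommMonoid α] [Mul α]
    (a₁₁ a₁₂ a₁₃ a₁₄ a₂₁ a₂₂ a₂₃ a₂₄ a₃₁ a₃₂ a₃₃ a₃₄ a₄₁ a₄₂ a₄₃ a₄₄
     b₁₁ b₁₂ b₁₃ b₁₄ b₂₁ b₂₂ b₂₃ b₂₄ b₃₁ b₃₂ b₃₃ b₃₄ b₄₁ b₄₂ b₄₃ b₄₄ : α) :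
    !![a₁₁, a₁₂, a₁₃, a₁₄; a₂₁, a₂₂, a₂₃, a₂₄; a₃₁, a₃₂, a₃₃, a₃₄; a₄₁, a₄₂, a₄₃, a₄₄] *
    !![b₁₁, b₁₂, b₁₃, b₁₄; b₂₁, b₂₂, b₂₃, b₂₄; b₃₁, b₃₂, b₃₃, b₃₄; b₄₁, b₄₂, b₄₃, b₄₄] =
    !![a₁₁*b₁₁ + a₁₂*b₂₁ + a₁₃*b₃₁ + a₁₄*b₄₁, a₁₁*b₁₂ + a₁₂*b₂₂ + a₁₃*b₃₂ + a₁₄*b₄₂,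
       a₁₁*b₁₃ + a₁₂*b₂₃ + a₁₃*b₃₃ + a₁₄*b₄₃, a₁₁*b₁₄ + a₁₂*b₂₄ + a₁₃*b₃₄ + a₁₄*b₄₄;
       a₂₁*b₁₁ + a₂₂*b₂₁ + a₂₃*b₃₁ + a₂₄*b₄₁, a₂₁*b₁₂ + a₂₂*b₂₂ + a₂₃*b₃₂ + a₂₄*b₄₂,
       a₂₁*b₁₃ + a₂₂*b₂₃ + a₂₃*b₃₃ + a₂₄*b₄₃, a₂₁*b₁₄ + a₂₂*b₂₄ + a₂₃*b₃₄ + a₂₄*b₄₄;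
       a₃₁*b₁₁ + a₃₂*b₂₁ + a₃₃*b₃₁ + a₃₄*b₄₁, a₃₁*b₁₂ + a₃₂*b₂₂ + a₃₃*b₃₂ + a₃₄*b₄₂,
       a₃₁*b₁₃ + a₃₂*b₂₃ + a₃₃*b₃₃ + a₃₄*b₄₃, a₃₁*b₁₄ + a₃₂*b₂₄ + a₃₃*b₃₄ + a₃₄*b₄₄;
       a₄₁*b₁₁ + a₄₂*b₂₁ + a₄₃*b₃₁ + a₄₄*b₄₁, a₄₁*b₁₂ + a₄₂*b₂₂ + a₄₃*b₃₂ + a₄₄*b₄₂,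
       a₄₁*b₁₃ + a₄₂*b₂₃ + a₄₃*b₃₃ + a₄₄*b₄₃, a₄₁*b₁₄ + a₄₂*b₂₄ + a₄₃*b₃₄ + a₄₄*b₄₄] := by
  ext i j
  fin_cases i <;> fin_cases j <;> simp [Matrix.mul_apply, Fin.sum_univ_four]

section Aux

variable {n : ℕ}

lemma Atil_mul' (A B : Matrix (Fin (n-1)) (Fin (n-1)) ℚ) : Atil A * Atil B = Atil (A*B) := by
  unfold Atil; rw [Matrix.fromBlocks_multiply]; simp

lemma Atil_add' (A B : Matrix (Fin (n-1)) (Fin (n-1)) ℚ) : Atil (A + B) = Atil A + Atil B := by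
  unfold Atil; rw [Matrix.fromBlocks_add]; simp

lemma Atil_smul' (c : ℚ) (A : Matrix (Fin (n-1)) (Fin (n-1)) ℚ) : Atil (c • A) = c • Atil A := by
  unfold Atil; rw [Matrix.fromBlocks_smul]; simp

lemma one_eq' (n : ℕ) : (1 : Matrix (Fin 1 ⊕ Fin (n-1)) (Fin 1 ⊕ Fin (n-1)) ℚ)
    = Matrix.fromBlocks 1 0 0 0 + Atil 1 := by
  rw [← Matrix.fromBlocks_one, Atil, Matrix.fromBlocks_add]; simp

lemma etil_eq' (n : ℕ) : Etil n
    = Matrix.fromBlocks 0 (Matrix.of fun _ _ => 1) 0 0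
      + Matrix.fromBlocks 0 0 (Matrix.of fun _ _ => 1) 0 := by
  rw [Etil, Matrix.fromBlocks_add]; simp

lemma etil_mul_atil' (b : ℚ) (A : Matrix (Fin (n-1)) (Fin (n-1)) ℚ)
    (hc : ∀ j, ∑ i, A i j = b) :
    Etil n * Atil A = b • Matrix.fromBlocks 0 (Matrix.of fun _ _ => 1) 0 0 := by
  rw [Etil, Atil, Matrix.fromBlocks_multiply, Matrix.fromBlocks_smul]
  simp
  ext i j
  simp [Matrix.mul_apply, hc j]

lemma atil_mul_etil' (b : ℚ) (A : Matrix (Fin (n-1)) (Fin (n-1)) ℚ)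
    (hr : ∀ i, ∑ j, A i j = b) :
    Atil A * Etil n = b • Matrix.fromBlocks 0 0 (Matrix.of fun _ _ => 1) 0 := by
  rw [Etil, Atil, Matrix.fromBlocks_multiply, Matrix.fromBlocks_smul]
  simp
  ext i j
  simp [Matrix.mul_apply, hr i]

lemma etil_mul_etil' (b : ℚ) (A₁ : Matrix (Fin (n-1)) (Fin (n-1)) ℚ)
    (hn : 4 ≤ n)
    (hnb : ((n:ℚ) - 2) = 2*b)
    (hsum : A₁ + A₁ᵀ = (Matrix.of fun _ _ => (1 : ℚ)) - 1) :
    Etil n * Etil n = (2*b+1) • Matrix.fromBlocks 1 0 0 0 + (Atil 1 + Atil A₁ + Atil A₁ᵀ) := by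
  have hcard : ((n - 1 : ℕ) : ℚ) = 2*b+1 := by
    rw [Nat.cast_sub (by omega)]; push_cast; linarith
  have hs : ∀ i j, A₁ i j + A₁ j i = 1 - ((1 : Matrix (Fin (n-1)) (Fin (n-1)) ℚ) i j) :=
    fun i j => by
      have h := congrFun (congrFun hsum i) j
      simpa using h
  ext (i|i) (j|j) <;>
    simp [Etil, Atil, Matrix.mul_apply, Fintype.sum_sum_type, Matrix.one_apply,
      Fin.eq_zero, hcard]
  have := hs i j
  rw [Matrix.one_apply] at this
  by_cases hij : i = j <;> simp [hij] at this ⊢ <;> linarith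

lemma kron_sub' (A : Matrix (Fin 1 ⊕ Fin (n-1)) (Fin 1 ⊕ Fin (n-1)) ℚ)
    (B C : Matrix (Fin 4) (Fin 4) ℚ) :
    A ⊗ₖ (B - C) = A ⊗ₖ B - A ⊗ₖ C := by
  ext ⟨i, k⟩ ⟨j, l⟩
  simp [Matrix.kroneckerMap_apply]
  ring

lemma master_mu (hn : 4 ≤ n) (a b : ℚ)
    (ha : a = (n : ℚ) - 1) (hb : b = ((n : ℚ) - 2) / 2)
    (A₁ : Matrix (Fin (n - 1)) (Fin (n - 1)) ℚ)
    (hsum : A₁ + A₁ᵀ = (Matrix.of fun _ _ => (1 : ℚ)) - 1)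
    (hrow : ∀ i, ∑ j, A₁ i j = b)
    (h11 : A₁ * A₁ = ((b - 1) / 2) • A₁ + ((b + 1) / 2) • A₁ᵀ)
    (h22 : A₁ᵀ * A₁ᵀ = ((b + 1) / 2) • A₁ + ((b - 1) / 2) • A₁ᵀ)
    (h12 : A₁ * A₁ᵀ = b • (1 : Matrix (Fin (n - 1)) (Fin (n - 1)) ℚ)
      + ((b - 1) / 2) • A₁ + ((b - 1) / 2) • A₁ᵀ)
    (h21 : A₁ᵀ * A₁ = b • (1 : Matrix (Fin (n - 1)) (Fin (n - 1)) ℚ)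
      + ((b - 1) / 2) • A₁ + ((b - 1) / 2) • A₁ᵀ)
    (g g' : Matrix (Fin 4) (Fin 4) ℚ)
    (H1 : g * (g' * yD) + g * (g' * xD ^ 2 * yD) = g * g' * xD + g * g' * xD ^ 3)
    (H2 : g * yD * g' + g * xD ^ 2 * yD * g' = g * g' * xD + g * g' * xD ^ 3)
    (H3 : g * yD * (g' * xD ^ 2 * yD) + g * xD ^ 2 * yD * (g' * yD) = g * g' + g * g')
    (H4 : g * xD ^ 2 * yD * (g' * xD ^ 2 * yD) = g * yD * (g' * yD))
    (H5 : g * g' + g * yD * (g' * yD) = g * g' * xD * yD + g * g' * xD ^ 3 * yD)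
    (H6a : g * g' * xD * xD ^ 2 * yD = g * g' * xD ^ 3 * yD)
    (H6b : g * g' * xD ^ 3 * xD ^ 2 * yD = g * g' * xD * yD) :
    mu A₁ g * mu A₁ g' = a • sig n (g * g') + b • mu A₁ (g * g' * xD)
      + b • mu A₁ (g * g' * xD ^ 3) := by
  have ha' : a = 2*b + 1 := by rw [ha, hb]; ring
  have hnb : ((n:ℚ) - 2) = 2*b := by rw [hb]; ring
  have hcolT : ∀ j, ∑ i, A₁ᵀ i j = b := fun j => by
    simpa [Matrix.transpose_apply] using hrow j
  have hcol : ∀ j, ∑ i, A₁ i j = b := by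
    intro j
    have h1 : ∀ i, A₁ i j + A₁ j i
        = 1 - ((1 : Matrix (Fin (n-1)) (Fin (n-1)) ℚ) i j) := fun i => by
      have h := congrFun (congrFun hsum i) j
      simpa using h
    have h2 : (∑ i, A₁ i j) + (∑ i, A₁ j i)
        = (↑(n-1) : ℚ) - 1 := by
      rw [← Finset.sum_add_distrib]
      simp only [h1]
      rw [Finset.sum_sub_distrib]
      simp [Matrix.one_apply, Finset.sum_ite_eq]
    have hcard : ((n - 1 : ℕ) : ℚ) = 2*b+1 := by
      rw [Nat.cast_sub (by omega)]; push_cast; linarith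
    rw [hrow j, hcard] at h2
    linarith
  have hrowT : ∀ i, ∑ j, A₁ᵀ i j = b := fun i => by
    simpa [Matrix.transpose_apply] using hcol i
  have hEE := etil_mul_etil' b A₁ hn hnb hsum
  have hEA1 := etil_mul_atil' b A₁ hcol
  have hEA2 := etil_mul_atil' b A₁ᵀ hcolT
  have hA1E := atil_mul_etil' b A₁ hrow
  have hA2E := atil_mul_etil' b A₁ᵀ hrowT
  have hA11 : Atil A₁ * Atil A₁ = ((b-1)/2) • Atil A₁ + ((b+1)/2) • Atil A₁ᵀ := by
    rw [Atil_mul', h11, Atil_add', Atil_smul', Atil_smul']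
  have hA22 : Atil A₁ᵀ * Atil A₁ᵀ = ((b+1)/2) • Atil A₁ + ((b-1)/2) • Atil A₁ᵀ := by
    rw [Atil_mul', h22, Atil_add', Atil_smul', Atil_smul']
  have hA12 : Atil A₁ * Atil A₁ᵀ
      = b • Atil 1 + ((b-1)/2) • Atil A₁ + ((b-1)/2) • Atil A₁ᵀ := by
    rw [Atil_mul', h12, Atil_add', Atil_add', Atil_smul', Atil_smul', Atil_smul']
  have hA21 : Atil A₁ᵀ * Atil A₁
      = b • Atil 1 + ((b-1)/2) • Atil A₁ + ((b-1)/2) • Atil A₁ᵀ := by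
    rw [Atil_mul', h21, Atil_add', Atil_add', Atil_smul', Atil_smul', Atil_smul']
  have H1' : g * (g' * xD ^ 2 * yD)
      = g * g' * xD + g * g' * xD ^ 3 - g * (g' * yD) := by
    rw [eq_sub_iff_add_eq, add_comm]; exact H1
  have H2' : g * xD ^ 2 * yD * g'
      = g * g' * xD + g * g' * xD ^ 3 - g * yD * g' := by
    rw [eq_sub_iff_add_eq, add_comm]; exact H2
  have H3' : g * xD ^ 2 * yD * (g' * yD)
      = g * g' + g * g' - g * yD * (g' * xD ^ 2 * yD) := by
    rw [eq_sub_iff_add_eq, add_comm]; exact H3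
  have H5' : g * yD * (g' * yD)
      = g * g' * xD * yD + g * g' * xD ^ 3 * yD - g * g' := by
    rw [eq_sub_iff_add_eq, add_comm]; exact H5
  unfold mu sig
  rw [ha']
  simp only [add_mul, mul_add, ← Matrix.mul_kronecker_mul]
  rw [hEE, hEA1, hEA2, hA1E, hA2E, hA11, hA22, hA12, hA21]
  rw [H1', H2', H4, H3', H5', H6a, H6b]
  rw [etil_eq', one_eq']
  simp only [Matrix.add_kronecker, Matrix.kronecker_add, Matrix.smul_kronecker,
    Matrix.kronecker_smul, kron_sub']
  module

end Aux

set_option maxHeartbeats 2000000 in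
theorem stmt_8 (n : ℕ) (hn : 4 ≤ n) (a b : ℚ)
    (ha : a = (n : ℚ) - 1) (hb : b = ((n : ℚ) - 2) / 2)
    (A₁ : Matrix (Fin (n - 1)) (Fin (n - 1)) ℚ)
    (h01 : ∀ i j, A₁ i j = 0 ∨ A₁ i j = 1)
    (hdiag : ∀ i, A₁ i i = 0)
    (hns : A₁ ≠ A₁ᵀ)
    (hsum : A₁ + A₁ᵀ = (Matrix.of fun _ _ => (1 : ℚ)) - 1)
    (hrow : ∀ i, ∑ j, A₁ i j = b)
    (h11 : A₁ * A₁ = ((b - 1) / 2) • A₁ + ((b + 1) / 2) • A₁ᵀ)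
    (h22 : A₁ᵀ * A₁ᵀ = ((b + 1) / 2) • A₁ + ((b - 1) / 2) • A₁ᵀ)
    (h12 : A₁ * A₁ᵀ = b • (1 : Matrix (Fin (n - 1)) (Fin (n - 1)) ℚ)
      + ((b - 1) / 2) • A₁ + ((b - 1) / 2) • A₁ᵀ)
    (h21 : A₁ᵀ * A₁ = b • (1 : Matrix (Fin (n - 1)) (Fin (n - 1)) ℚ)
      + ((b - 1) / 2) • A₁ + ((b - 1) / 2) • A₁ᵀ) :
    ∀ g ∈ ({xD, xD ^ 3, xD * yD, xD ^ 3 * yD} : Set (Matrix (Fin 4) (Fin 4) ℚ)), ∀ g' ∈ ({xD, xD ^ 3, xD * yD, xD ^ 3 * yD} : Set (Matrix (Fin 4) (Fin 4) ℚ)), mu A₁ g * mu A₁ g' = a • sig n (g * g') + b • mu A₁ (g * g' * xD) + b • mu A₁ (g * g' * xD ^ 3) := by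
  intro g hg g' hg'
  simp only [Set.mem_insert_iff, Set.mem_singleton_iff] at hg hg'
  rcases hg with rfl | rfl | rfl | rfl <;> rcases hg' with rfl | rfl | rfl | rfl <;>
    (apply master_mu hn a b ha hb A₁ hsum hrow h11 h22 h12 h21 <;>
      norm_num [xD, yD, pow_succ, mul_fin_four', Matrix.of_add_of])
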